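/- arXiv:1911.12471 — 3 statements merged into one kernel-verified Lean document; each statement's English description precedes it below -/
import Mathlib

section
/- A connected critical graph (a graph in which removing any edge strictly increases the independence number) has no clique cutset; that is, there is no set of pairwise adjacent vertices whose removal disconnects the graph. -/
open SimpleGraph

/-- A set of vertices is independent if no two of its members are adjacent. -/
def IsIndepSet {V : Type*} (G : SimpleGraph V) (s : Set V) : Prop :=
  s.Pairwise fun a b => ¬ G.Adj a b

/-- The independence number of a graph: the maximum size of an independent set. -/
noncomputable def alpha {V : Type*} (G : SimpleGraph V) : ℕ :=
  sSup {n | ∃ s : Finset V, _root_.IsIndepSet G (s : Set V) ∧ s.card = n}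

/-- A graph is critical if deleting any edge strictly increases the independence number. -/
def IsCritical {V : Type*} (G : SimpleGraph V) : Prop :=
  ∀ e ∈ G.edgeSet, alpha G < alpha (G.deleteEdges {e})

set_option linter.unusedSectionVars false
section Aux
variable {V : Type*} [Fintype V] [DecidableEq V] {G : SimpleGraph V}

lemma indep_card_le (s : Finset V) (hs : _root_.IsIndepSet G (s : Set V)) : s.card ≤ alpha G :=
  le_csSup ⟨Fintype.card V, fun n hn => by
    obtain ⟨t, _, rfl⟩ := hn; simpa using t.card_le_univ⟩ ⟨s, hs, rfl⟩

lemma alpha_mem : ∃ s : Finset V, _root_.IsIndepSet G (s : Set V) ∧ s.card = alpha G := by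
  have h : alpha G ∈ {n | ∃ s : Finset V, _root_.IsIndepSet G (s : Set V) ∧ s.card = n} := by
    apply Nat.sSup_mem
    · exact ⟨0, ∅, by simp [_root_.IsIndepSet], by simp⟩
    · exact ⟨Fintype.card V, fun n hn => by obtain ⟨t, _, rfl⟩ := hn; simpa using t.card_le_univ⟩
  exact h

lemma crit_exists (hcrit : IsCritical G) {x a : V} (hxa : G.Adj x a) :
    ∃ S : Finset V, x ∈ S ∧ a ∈ S ∧ S.card = alpha G + 1 ∧
      (∀ p ∈ S, p ≠ x → ∀ q ∈ S, q ≠ x → ¬ G.Adj p q) ∧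
      (∀ q ∈ S, q ≠ a → ¬ G.Adj x q) ∧
      (∀ q ∈ S, q ≠ x → ¬ G.Adj a q) := by
  classical
  have he : s(x, a) ∈ G.edgeSet := hxa
  have hlt := hcrit _ he
  obtain ⟨S, hS, hcard⟩ := alpha_mem (G := G.deleteEdges {s(x, a)})
  have key : ∀ p ∈ S, ∀ q ∈ S, G.Adj p q → (p = x ∧ q = a) ∨ (p = a ∧ q = x) := by
    intro p hp q hq hadj
    have h1 : ¬ (G.deleteEdges {s(x,a)}).Adj p q :=
      hS (Finset.mem_coe.mpr hp) (Finset.mem_coe.mpr hq) hadj.ne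
    rw [deleteEdges_adj] at h1
    have h2 : s(p, q) ∈ ({s(x,a)} : Set (Sym2 V)) := by
      by_contra h3
      exact h1 ⟨hadj, h3⟩
    rw [Set.mem_singleton_iff, Sym2.eq_iff] at h2
    exact h2
  have hxS : x ∈ S := by
    by_contra hx
    have hind : _root_.IsIndepSet G (S : Set V) := by
      intro p hp q hq hne hadj
      rcases key p (Finset.mem_coe.mp hp) q (Finset.mem_coe.mp hq) hadj with ⟨h1, _⟩ | ⟨_, h2⟩
      · exact hx (h1 ▸ Finset.mem_coe.mp hp)
      · exact hx (h2 ▸ Finset.mem_coe.mp hq)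
    have := indep_card_le S hind
    omega
  have haS : a ∈ S := by
    by_contra ha
    have hind : _root_.IsIndepSet G (S : Set V) := by
      intro p hp q hq hne hadj
      rcases key p (Finset.mem_coe.mp hp) q (Finset.mem_coe.mp hq) hadj with ⟨_, h1⟩ | ⟨h2, _⟩
      · exact ha (h1 ▸ Finset.mem_coe.mp hq)
      · exact ha (h2 ▸ Finset.mem_coe.mp hp)
    have := indep_card_le S hind
    omega
  have hA : ∀ p ∈ S, p ≠ x → ∀ q ∈ S, q ≠ x → ¬ G.Adj p q := by
    intro p hp hpx q hq hqx hadj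
    rcases key p hp q hq hadj with ⟨h1, _⟩ | ⟨_, h2⟩
    · exact hpx h1
    · exact hqx h2
  have hxfree : ∀ q ∈ S, q ≠ a → ¬ G.Adj x q := by
    intro q hq hqa hadj
    rcases key x hxS q hq hadj with ⟨_, h1⟩ | ⟨h1, h2⟩
    · exact hqa h1
    · exact G.irrefl (h2 ▸ hadj)
  have hafree : ∀ q ∈ S, q ≠ x → ¬ G.Adj a q := by
    intro q hq hqx hadj
    rcases key a haS q hq hadj with ⟨h1, _⟩ | ⟨_, h2⟩
    · exact G.irrefl (h1 ▸ hxa)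
    · exact hqx h2
  have hcard' : S.card = alpha G + 1 := by
    have herase : _root_.IsIndepSet G ((S.erase x : Finset V) : Set V) := by
      intro p hp q hq hne hadj
      rw [Finset.mem_coe, Finset.mem_erase] at hp hq
      exact hA p hp.2 hp.1 q hq.2 hq.1 hadj
    have h1 := indep_card_le _ herase
    rw [Finset.card_erase_of_mem hxS] at h1
    omega
  exact ⟨S, hxS, haS, hcard', hA, hxfree, hafree⟩

lemma walk_cross {S : Set V} : ∀ {c d : V}, G.Walk c d → c ∈ S → d ∉ S →
    ∃ p q, p ∈ S ∧ q ∉ S ∧ G.Adj p q := by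
  intro c d w
  induction w with
  | nil => intro h h'; exact absurd h h'
  | @cons c m d h w ih =>
    intro hc hd
    by_cases hm : m ∈ S
    · exact ih hm hd
    · exact ⟨c, m, hc, hm, h⟩

lemma indep_union {P Q : Finset V}
    (hPP : ∀ p ∈ P, ∀ q ∈ P, ¬ G.Adj p q)
    (hQQ : ∀ p ∈ Q, ∀ q ∈ Q, ¬ G.Adj p q)
    (hPQ : ∀ p ∈ P, ∀ q ∈ Q, ¬ G.Adj p q) :
    _root_.IsIndepSet G ((P ∪ Q : Finset V) : Set V) := by
  intro p hp q hq hne hadj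
  rw [Finset.coe_union, Set.mem_union, Finset.mem_coe, Finset.mem_coe] at hp hq
  rcases hp with hp | hp <;> rcases hq with hq | hq
  · exact hPP p hp q hq hadj
  · exact hPQ p hp q hq hadj
  · exact hPQ q hq p hp hadj.symm
  · exact hQQ p hp q hq hadj

lemma indep_insert_union {x : V} {P Q : Finset V}
    (hPP : ∀ p ∈ P, ∀ q ∈ P, ¬ G.Adj p q)
    (hQQ : ∀ p ∈ Q, ∀ q ∈ Q, ¬ G.Adj p q)
    (hPQ : ∀ p ∈ P, ∀ q ∈ Q, ¬ G.Adj p q)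
    (hxP : ∀ p ∈ P, ¬ G.Adj x p)
    (hxQ : ∀ q ∈ Q, ¬ G.Adj x q) :
    _root_.IsIndepSet G ((insert x (P ∪ Q) : Finset V) : Set V) := by
  intro p hp q hq hne hadj
  rw [Finset.coe_insert, Set.mem_insert_iff, Finset.coe_union, Set.mem_union,
    Finset.mem_coe, Finset.mem_coe] at hp hq
  rcases hp with rfl | hp | hp <;> rcases hq with rfl | hq | hq
  · exact hne rfl
  · exact hxP q hq hadj
  · exact hxQ q hq hadj
  · exact hxP p hp hadj.symm
  · exact hPP p hp q hq hadj
  · exact hPQ p hp q hq hadj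
  · exact hxQ p hp hadj.symm
  · exact hPQ q hq p hp hadj.symm
  · exact hQQ p hp q hq hadj

lemma card_insert_union {x : V} {P Q : Finset V} (hxP : x ∉ P) (hxQ : x ∉ Q)
    (hdisj : ∀ p ∈ P, p ∉ Q) :
    (insert x (P ∪ Q)).card = P.card + Q.card + 1 := by
  classical
  rw [Finset.card_insert_of_notMem (by simp [hxP, hxQ]),
    Finset.card_union_of_disjoint (Finset.disjoint_left.mpr hdisj)]

lemma filter_partition_card {s : Finset V} {A B : Set V}
    [DecidablePred (· ∈ A)] [DecidablePred (· ∈ B)]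
    (h : ∀ z ∈ s, z ∈ A ∨ z ∈ B) (hd : ∀ z, z ∈ A → z ∉ B) :
    (s.filter (· ∈ A)).card + (s.filter (· ∈ B)).card = s.card := by
  classical
  have : s.filter (· ∈ B) = s.filter (fun z => ¬ z ∈ A) := by
    ext z
    simp only [Finset.mem_filter, and_congr_right_iff]
    intro hz
    constructor
    · intro hB hA; exact hd z hA hB
    · intro hA; rcases h z hz with h1 | h1
      · exact absurd h1 hA
      · exact h1
  rw [this]
  exact Finset.card_filter_add_card_filter_not _

end Aux

/-- A connected critical graph has no clique cutset: removing any set of pairwise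
adjacent vertices leaves a graph in which any two vertices are still joined by a path. -/
theorem stmt_1 {V : Type*} [Fintype V] (G : SimpleGraph V)
    (hconn : G.Connected) (hcrit : IsCritical G) :
    ∀ X : Set V, G.IsClique X → (G.induce Xᶜ).Preconnected := by
  classical
  intro X hX u v
  by_contra hne
  set V₁ : Set V := {w | ∃ hw : w ∈ Xᶜ, (G.induce Xᶜ).Reachable u ⟨w, hw⟩} with hV₁def
  set V₂ : Set V := Xᶜ \ V₁ with hV₂def
  have hV₁sub : V₁ ⊆ Xᶜ := fun w hw => hw.1
  have hdisj12 : ∀ z, z ∈ V₁ → z ∉ V₂ := fun z hz h2 => h2.2 hz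
  have hu1 : (u : V) ∈ V₁ := ⟨u.2, by rw [Subtype.coe_eta]⟩
  have hv2 : (v : V) ∈ V₂ := by
    refine ⟨v.2, fun hv1 => ?_⟩
    obtain ⟨hv, hr⟩ := hv1
    rw [Subtype.coe_eta] at hr
    exact hne hr
  have hnoedge : ∀ p ∈ V₁, ∀ q ∈ V₂, ¬ G.Adj p q := by
    rintro p ⟨hp, hrp⟩ q ⟨hq, hq1⟩ hadj
    refine hq1 ⟨hq, hrp.trans (Adj.reachable ?_)⟩
    show (G.induce Xᶜ).Adj ⟨p, hp⟩ ⟨q, hq⟩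
    simpa using hadj
  have hcover : ∀ w : V, w ∉ X → w ∈ V₁ ∨ w ∈ V₂ := by
    intro w hw
    by_cases h1 : w ∈ V₁
    · exact Or.inl h1
    · exact Or.inr ⟨hw, h1⟩
  -- crossing edge from V₁ to X
  obtain ⟨w₁⟩ := hconn.preconnected (u : V) (v : V)
  obtain ⟨a, x, ha1, hx1, haxadj⟩ := walk_cross w₁ hu1 (fun h => (hv2.2 h : False))
  have hxX : x ∈ X := by
    by_contra hxX
    rcases hcover x hxX with h | h
    · exact hx1 h
    · exact hnoedge a ha1 x h haxadj
  obtain ⟨w₂⟩ := hconn.preconnected (v : V) (u : V)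
  obtain ⟨b, x', hb2, hx'2, hbxadj⟩ := walk_cross w₂ hv2 (hdisj12 _ hu1)
  have hx'X : x' ∈ X := by
    by_contra hx'X
    rcases hcover x' hx'X with h | h
    · exact hnoedge x' h b hb2 hbxadj.symm
    · exact hx'2 h
  have haX : a ∉ X := hV₁sub ha1
  have hbX : b ∉ X := hb2.1
  have hxa : G.Adj x a := haxadj.symm
  have hx'b : G.Adj x' b := hbxadj.symm
  obtain ⟨S₁, hxS₁, haS₁, hcard₁, hA₁, hxfree₁, hafree₁⟩ := crit_exists hcrit hxa
  obtain ⟨S₂, hx'S₂, hbS₂, hcard₂, hx'free₂A, hx'free₂, hbfree₂⟩ := crit_exists hcrit hx'b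
  -- members of S₁ in X equal x
  have hS₁X : ∀ z ∈ S₁, z ∈ X → z = x := by
    intro z hz hzX
    by_contra hzx
    have hza : z ≠ a := fun h => haX (h ▸ hzX)
    exact hxfree₁ z hz hza (hX hxX hzX (Ne.symm hzx))
  have hS₂X : ∀ z ∈ S₂, z ∈ X → z = x' := by
    intro z hz hzX
    by_contra hzx
    have hzb : z ≠ b := fun h => hbX (h ▸ hzX)
    exact hx'free₂ z hz hzb (hX hx'X hzX (Ne.symm hzx))
  set A₁ : Finset V := (S₁.erase x).filter (· ∈ V₁) with hA₁def
  set A₂ : Finset V := (S₁.erase x).filter (· ∈ V₂) with hA₂def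
  set B₁ : Finset V := (S₂.erase x').filter (· ∈ V₁) with hB₁def
  set B₂ : Finset V := (S₂.erase x').filter (· ∈ V₂) with hB₂def
  have hApart : A₁.card + A₂.card = alpha G := by
    have hcov : ∀ z ∈ S₁.erase x, z ∈ V₁ ∨ z ∈ V₂ := by
      intro z hz
      rw [Finset.mem_erase] at hz
      exact hcover z (fun hzX => hz.1 (hS₁X z hz.2 hzX))
    rw [hA₁def, hA₂def, filter_partition_card hcov hdisj12,
      Finset.card_erase_of_mem hxS₁, hcard₁]
    omega
  have hBpart : B₁.card + B₂.card = alpha G := by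
    have hcov : ∀ z ∈ S₂.erase x', z ∈ V₁ ∨ z ∈ V₂ := by
      intro z hz
      rw [Finset.mem_erase] at hz
      exact hcover z (fun hzX => hz.1 (hS₂X z hz.2 hzX))
    rw [hB₁def, hB₂def, filter_partition_card hcov hdisj12,
      Finset.card_erase_of_mem hx'S₂, hcard₂]
    omega
  -- generic membership unpacking
  have hA₁mem : ∀ z ∈ A₁, z ∈ S₁ ∧ z ≠ x ∧ z ∈ V₁ := by
    intro z hz; rw [hA₁def, Finset.mem_filter, Finset.mem_erase] at hz; exact ⟨hz.1.2, hz.1.1, hz.2⟩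
  have hA₂mem : ∀ z ∈ A₂, z ∈ S₁ ∧ z ≠ x ∧ z ∈ V₂ := by
    intro z hz; rw [hA₂def, Finset.mem_filter, Finset.mem_erase] at hz; exact ⟨hz.1.2, hz.1.1, hz.2⟩
  have hB₁mem : ∀ z ∈ B₁, z ∈ S₂ ∧ z ≠ x' ∧ z ∈ V₁ := by
    intro z hz; rw [hB₁def, Finset.mem_filter, Finset.mem_erase] at hz; exact ⟨hz.1.2, hz.1.1, hz.2⟩
  have hB₂mem : ∀ z ∈ B₂, z ∈ S₂ ∧ z ≠ x' ∧ z ∈ V₂ := by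
    intro z hz; rw [hB₂def, Finset.mem_filter, Finset.mem_erase] at hz; exact ⟨hz.1.2, hz.1.1, hz.2⟩
  -- internal non-adjacency
  have hA₁A₁ : ∀ p ∈ A₁, ∀ q ∈ A₁, ¬ G.Adj p q := fun p hp q hq =>
    hA₁ p (hA₁mem p hp).1 (hA₁mem p hp).2.1 q (hA₁mem q hq).1 (hA₁mem q hq).2.1
  have hA₂A₂ : ∀ p ∈ A₂, ∀ q ∈ A₂, ¬ G.Adj p q := fun p hp q hq =>
    hA₁ p (hA₂mem p hp).1 (hA₂mem p hp).2.1 q (hA₂mem q hq).1 (hA₂mem q hq).2.1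
  have hB₁B₁ : ∀ p ∈ B₁, ∀ q ∈ B₁, ¬ G.Adj p q := fun p hp q hq =>
    hx'free₂A p (hB₁mem p hp).1 (hB₁mem p hp).2.1 q (hB₁mem q hq).1 (hB₁mem q hq).2.1
  have hB₂B₂ : ∀ p ∈ B₂, ∀ q ∈ B₂, ¬ G.Adj p q := fun p hp q hq =>
    hx'free₂A p (hB₂mem p hp).1 (hB₂mem p hp).2.1 q (hB₂mem q hq).1 (hB₂mem q hq).2.1
  have hA₁B₂ : ∀ p ∈ A₁, ∀ q ∈ B₂, ¬ G.Adj p q := fun p hp q hq =>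
    hnoedge p (hA₁mem p hp).2.2 q (hB₂mem q hq).2.2
  have hB₁A₂ : ∀ p ∈ B₁, ∀ q ∈ A₂, ¬ G.Adj p q := fun p hp q hq =>
    hnoedge p (hB₁mem p hp).2.2 q (hA₂mem q hq).2.2
  -- x free from A₂, x' free from B₁
  have hxA₂ : ∀ q ∈ A₂, ¬ G.Adj x q := fun q hq =>
    hxfree₁ q (hA₂mem q hq).1 (fun h => hdisj12 a ha1 (h ▸ (hA₂mem q hq).2.2))
  have hx'B₁ : ∀ q ∈ B₁, ¬ G.Adj x' q := fun q hq =>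
    hx'free₂ q (hB₁mem q hq).1 (fun h => hdisj12 b (h ▸ (hB₁mem q hq).2.2) hb2)
  -- the set A₁ ∪ B₂ is independent
  have hT₀ : (A₁ ∪ B₂).card ≤ alpha G :=
    indep_card_le _ (indep_union hA₁A₁ hB₂B₂ hA₁B₂)
  have hT₀card : (A₁ ∪ B₂).card = A₁.card + B₂.card :=
    Finset.card_union_of_disjoint (Finset.disjoint_left.mpr
      (fun p hp hq => hdisj12 p (hA₁mem p hp).2.2 (hB₂mem p hq).2.2))
  by_cases hxx' : x = x'
  · -- T = insert x (B₁ ∪ A₂)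
    subst hxx'
    have hind : _root_.IsIndepSet G ((insert x (B₁ ∪ A₂) : Finset V) : Set V) :=
      indep_insert_union hB₁B₁ hA₂A₂ hB₁A₂ hx'B₁ hxA₂
    have hc : (insert x (B₁ ∪ A₂)).card = B₁.card + A₂.card + 1 :=
      card_insert_union (fun h => (hB₁mem x h).2.1 rfl) (fun h => (hA₂mem x h).2.1 rfl)
        (fun p hp hq => hdisj12 p (hB₁mem p hp).2.2 (hA₂mem p hq).2.2)
    have := indep_card_le _ hind
    rw [hc] at this
    rw [hT₀card] at hT₀
    omega
  · have hadjxx' : G.Adj x x' := hX hxX hx'X hxx'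
    obtain ⟨S₃, hxS₃, hx'S₃, hcard₃, hA₃, hxfree₃, hx'free₃⟩ := crit_exists hcrit hadjxx'
    have hS₃X : ∀ z ∈ S₃, z ∈ X → z = x ∨ z = x' := by
      intro z hz hzX
      by_contra hzx
      push_neg at hzx
      exact hxfree₃ z hz hzx.2 (hX hxX hzX (Ne.symm hzx.1))
    set C : Finset V := (S₃.erase x).erase x' with hCdef
    have hx'ex : x' ∈ S₃.erase x := Finset.mem_erase.mpr ⟨Ne.symm hxx', hx'S₃⟩
    set C₁ : Finset V := C.filter (· ∈ V₁) with hC₁def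
    set C₂ : Finset V := C.filter (· ∈ V₂) with hC₂def
    have hCmem : ∀ z ∈ C, z ∈ S₃ ∧ z ≠ x ∧ z ≠ x' := by
      intro z hz
      rw [hCdef, Finset.mem_erase, Finset.mem_erase] at hz
      exact ⟨hz.2.2, hz.2.1, hz.1⟩
    have hCpart : C₁.card + C₂.card + 2 = alpha G + 1 := by
      have hcov : ∀ z ∈ C, z ∈ V₁ ∨ z ∈ V₂ := by
        intro z hz
        obtain ⟨hz1, hz2, hz3⟩ := hCmem z hz
        refine hcover z (fun hzX => ?_)
        rcases hS₃X z hz1 hzX with h | h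
        · exact hz2 h
        · exact hz3 h
      rw [hC₁def, hC₂def, filter_partition_card hcov hdisj12]
      have h2 : 1 ≤ (S₃.erase x).card := Finset.card_pos.mpr ⟨x', hx'ex⟩
      rw [Finset.card_erase_of_mem hxS₃, hcard₃] at h2
      rw [hCdef, Finset.card_erase_of_mem hx'ex, Finset.card_erase_of_mem hxS₃, hcard₃]
      omega
    have hC₁mem : ∀ z ∈ C₁, z ∈ S₃ ∧ z ≠ x ∧ z ≠ x' ∧ z ∈ V₁ := by
      intro z hz; rw [hC₁def, Finset.mem_filter] at hz
      exact ⟨(hCmem z hz.1).1, (hCmem z hz.1).2.1, (hCmem z hz.1).2.2, hz.2⟩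
    have hC₂mem : ∀ z ∈ C₂, z ∈ S₃ ∧ z ≠ x ∧ z ≠ x' ∧ z ∈ V₂ := by
      intro z hz; rw [hC₂def, Finset.mem_filter] at hz
      exact ⟨(hCmem z hz.1).1, (hCmem z hz.1).2.1, (hCmem z hz.1).2.2, hz.2⟩
    have hC₁C₁ : ∀ p ∈ C₁, ∀ q ∈ C₁, ¬ G.Adj p q := fun p hp q hq =>
      hA₃ p (hC₁mem p hp).1 (hC₁mem p hp).2.1 q (hC₁mem q hq).1 (hC₁mem q hq).2.1
    have hC₂C₂ : ∀ p ∈ C₂, ∀ q ∈ C₂, ¬ G.Adj p q := fun p hp q hq =>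
      hA₃ p (hC₂mem p hp).1 (hC₂mem p hp).2.1 q (hC₂mem q hq).1 (hC₂mem q hq).2.1
    have hC₁A₂ : ∀ p ∈ C₁, ∀ q ∈ A₂, ¬ G.Adj p q := fun p hp q hq =>
      hnoedge p (hC₁mem p hp).2.2.2 q (hA₂mem q hq).2.2
    have hB₁C₂ : ∀ p ∈ B₁, ∀ q ∈ C₂, ¬ G.Adj p q := fun p hp q hq =>
      hnoedge p (hB₁mem p hp).2.2 q (hC₂mem q hq).2.2.2
    have hxC₁ : ∀ q ∈ C₁, ¬ G.Adj x q := fun q hq =>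
      hxfree₃ q (hC₁mem q hq).1 (hC₁mem q hq).2.2.1
    have hx'C₂ : ∀ q ∈ C₂, ¬ G.Adj x' q := fun q hq =>
      hx'free₃ q (hC₂mem q hq).1 (hC₂mem q hq).2.1
    -- T₁ = insert x (C₁ ∪ A₂)
    have hind₁ : _root_.IsIndepSet G ((insert x (C₁ ∪ A₂) : Finset V) : Set V) :=
      indep_insert_union hC₁C₁ hA₂A₂ hC₁A₂ hxC₁ hxA₂
    have hc₁ : (insert x (C₁ ∪ A₂)).card = C₁.card + A₂.card + 1 :=
      card_insert_union (fun h => (hC₁mem x h).2.1 rfl) (fun h => (hA₂mem x h).2.1 rfl)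
        (fun p hp hq => hdisj12 p (hC₁mem p hp).2.2.2 (hA₂mem p hq).2.2)
    have ht₁ := indep_card_le _ hind₁
    rw [hc₁] at ht₁
    -- T₂ = insert x' (B₁ ∪ C₂)
    have hind₂ : _root_.IsIndepSet G ((insert x' (B₁ ∪ C₂) : Finset V) : Set V) :=
      indep_insert_union hB₁B₁ hC₂C₂ hB₁C₂ hx'B₁ hx'C₂
    have hc₂ : (insert x' (B₁ ∪ C₂)).card = B₁.card + C₂.card + 1 :=
      card_insert_union (fun h => (hB₁mem x' h).2.1 rfl) (fun h => (hC₂mem x' h).2.2.1 rfl)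
        (fun p hp hq => hdisj12 p (hB₁mem p hp).2.2 (hC₂mem p hq).2.2.2)
    have ht₂ := indep_card_le _ hind₂
    rw [hc₂] at ht₂
    rw [hT₀card] at hT₀
    omega
end

section
/- In a critical graph, no vertex of degree 2 lies on a 4-cycle. -/
open SimpleGraph

lemma alpha_bdd {V : Type*} [Fintype V] (G : SimpleGraph V) :
    BddAbove {n | ∃ s : Finset V, _root_.IsIndepSet G (s : Set V) ∧ s.card = n} :=
  ⟨Fintype.card V, fun _ ⟨s, _, hc⟩ => hc ▸ Finset.card_le_univ s⟩

lemma card_le_alpha {V : Type*} [Fintype V] (G : SimpleGraph V) (s : Finset V)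
    (h : _root_.IsIndepSet G (s : Set V)) : s.card ≤ alpha G :=
  le_csSup (alpha_bdd G) ⟨s, h, rfl⟩

lemma exists_max_indep {V : Type*} [Fintype V] (G : SimpleGraph V) :
    ∃ s : Finset V, _root_.IsIndepSet G (s : Set V) ∧ s.card = alpha G := by
  have hne : {n | ∃ s : Finset V, _root_.IsIndepSet G (s : Set V) ∧ s.card = n}.Nonempty := by
    refine ⟨0, ∅, ?_, rfl⟩
    simp [_root_.IsIndepSet]
  exact Nat.sSup_mem hne (alpha_bdd G)

/-- In a critical graph, no vertex of degree `2` lies on a `4`-cycle. -/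
theorem stmt_5 {V : Type*} [Fintype V] (G : SimpleGraph V) [DecidableRel G.Adj]
    (hcrit : IsCritical G) (a b c d : V)
    (hab : G.Adj a b) (hbc : G.Adj b c) (hcd : G.Adj c d) (hda : G.Adj d a)
    (hac : a ≠ c) (hbd : b ≠ d) :
    G.degree a ≠ 2 := by
  classical
  intro hdeg
  have hkey := hcrit s(b, c) hbc
  set G' := G.deleteEdges {s(b, c)} with hG'
  obtain ⟨s, hs, hcard⟩ := exists_max_indep G'
  have hadj' : ∀ x y : V, G.Adj x y → s(x, y) ≠ s(b, c) → G'.Adj x y := by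
    intro x y h hne
    simp [hG', SimpleGraph.deleteEdges_adj, h, hne]
  -- b and c must both be in s
  have hbcs : b ∈ s ∧ c ∈ s := by
    by_contra h
    have hsg : _root_.IsIndepSet G (s : Set V) := by
      intro x hx y hy hxy hA
      have : s(x, y) = s(b, c) := by
        by_contra hne
        exact hs hx hy hxy (hadj' x y hA hne)
      rw [Sym2.eq_iff] at this
      rcases this with ⟨hb, hc⟩ | ⟨hc, hb⟩
      · exact h ⟨hb ▸ hx, hc ▸ hy⟩
      · exact h ⟨hb ▸ hy, hc ▸ hx⟩
    have := card_le_alpha G s hsg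
    omega
  obtain ⟨hbs, hcs⟩ := hbcs
  -- neighbors of a are exactly {b, d}
  have hN : ({b, d} : Finset V) = G.neighborFinset a := by
    apply Finset.eq_of_subset_of_card_le
    · intro x hx
      rcases Finset.mem_insert.mp hx with h | h
      · exact (SimpleGraph.mem_neighborFinset G a x).mpr (h ▸ hab)
      · exact (SimpleGraph.mem_neighborFinset G a x).mpr ((Finset.mem_singleton.mp h) ▸ hda.symm)
    · rw [Finset.card_pair hbd]
      exact le_of_eq hdeg
  -- a ∉ s
  have has : a ∉ s := by
    intro has
    apply hs has hbs hab.ne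
    apply hadj' a b hab
    intro heq
    rw [Sym2.eq_iff] at heq
    rcases heq with ⟨h1, h2⟩ | ⟨h1, h2⟩
    · exact hab.ne h1
    · exact hac h1
  -- d ∉ s
  have hds : d ∉ s := by
    intro hds
    apply hs hcs hds hcd.ne
    apply hadj' c d hcd
    intro heq
    rw [Sym2.eq_iff] at heq
    rcases heq with ⟨h1, h2⟩ | ⟨h1, h2⟩
    · exact hbc.ne h1.symm
    · exact hbd h2.symm
  -- the swap set
  set t : Finset V := insert a (s.erase b) with ht
  have hane : a ∉ s.erase b := fun h => has (Finset.mem_of_mem_erase h)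
  have hcardt : t.card = s.card := by
    rw [ht, Finset.card_insert_of_notMem hane, Finset.card_erase_of_mem hbs]
    have : 0 < s.card := Finset.card_pos.mpr ⟨b, hbs⟩
    omega
  have htind : _root_.IsIndepSet G (t : Set V) := by
    intro x hx y hy hxy hA
    simp only [ht, Finset.coe_insert, Set.mem_insert_iff, Finset.mem_coe,
      Finset.mem_erase] at hx hy
    -- helper: no vertex of s.erase b is adjacent to a
    have hnadj : ∀ z, z ≠ b → z ∈ s → ¬ G.Adj a z := by
      intro z hzb hzs hA
      have : z ∈ ({b, d} : Finset V) := hN ▸ (SimpleGraph.mem_neighborFinset G a z).mpr hA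
      rcases Finset.mem_insert.mp this with h | h
      · exact hzb h
      · exact hds ((Finset.mem_singleton.mp h) ▸ hzs)
    have hss : ∀ x y : V, x ≠ b → x ∈ s → y ≠ b → y ∈ s → x ≠ y → ¬ G.Adj x y := by
      intro x y hxb hxs hyb hys hxy hA
      apply hs hxs hys hxy
      apply hadj' x y hA
      intro heq
      rw [Sym2.eq_iff] at heq
      rcases heq with ⟨h1, h2⟩ | ⟨h1, h2⟩
      · exact hxb h1
      · exact hyb h2
    rcases hx with rfl | ⟨hxb, hxs⟩ <;> rcases hy with rfl | ⟨hyb, hys⟩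
    · exact hxy rfl
    · exact hnadj y hyb hys hA
    · exact hnadj x hxb hxs hA.symm
    · exact hss x y hxb hxs hyb hys hxy hA
  have := card_le_alpha G t htind
  omega
end

section
/- Let C = v₁v₂…v₂ₜ be a shortest even cycle in a graph G of girth at least 7 with maximum degree 3. Then C has at most one chord, and every chord of C joins two vertices at even distance along C. -/
open SimpleGraph List

namespace Stmt11Aux

variable {V : Type*} [DecidableEq V] {G : SimpleGraph V}

lemma idxOf_drop {α : Type*} [DecidableEq α] (y : α) :
    ∀ (l : List α) (i : ℕ), i ≤ l.idxOf y → (l.drop i).idxOf y = l.idxOf y - i := by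
  intro l
  induction l with
  | nil => intro i _; simp
  | cons a t ih =>
    intro i hi
    cases i with
    | zero => simp
    | succ k =>
      have hya : a ≠ y := by
        intro h; subst h; simp [List.idxOf_cons_self] at hi
      rw [List.drop_succ_cons, List.idxOf_cons_ne t hya] at *
      have : k ≤ t.idxOf y := by omega
      rw [ih k this]
      omega

lemma takeUntil_support_decomp {u w y : V} (p : G.Walk u w) (hy : y ∈ p.support) :
    ∃ l, y ∉ l ∧ (p.takeUntil y hy).support = l ++ [y] := by
  have hne : (p.takeUntil y hy).support ≠ [] := Walk.support_ne_nil _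
  have hlast : (p.takeUntil y hy).support.getLast hne = y := Walk.getLast_support _
  have hcount : (p.takeUntil y hy).support.count y = 1 :=
    Walk.count_support_takeUntil_eq_one p hy
  have hdecomp := List.dropLast_append_getLast hne
  rw [hlast] at hdecomp
  refine ⟨(p.takeUntil y hy).support.dropLast, ?_, hdecomp.symm⟩
  intro hmem
  have h2 : 0 < (p.takeUntil y hy).support.dropLast.count y := List.count_pos_iff.mpr hmem
  have h3 := List.count_append (a := y) (l₁ := (p.takeUntil y hy).support.dropLast) (l₂ := [y])
  rw [hdecomp] at h3
  simp at h3
  omega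

lemma idxOf_support_takeUntil {u w y : V} (p : G.Walk u w) (hy : y ∈ p.support) :
    p.support.idxOf y = (p.takeUntil y hy).length := by
  obtain ⟨l, hyl, hdec⟩ := takeUntil_support_decomp p hy
  have hspec : (p.takeUntil y hy).support ++ (p.dropUntil y hy).support.tail = p.support := by
    rw [← Walk.support_append, Walk.take_spec]
  have hlen := SimpleGraph.Walk.length_support (p.takeUntil y hy)
  rw [hdec] at hlen
  simp only [List.length_append, List.length_cons, List.length_nil] at hlen
  rw [← hspec, hdec, List.append_assoc, List.idxOf_append_of_notMem hyl]
  simp only [List.cons_append, List.idxOf_cons_self]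
  omega

lemma support_takeUntil_eq {u w y : V} (p : G.Walk u w) (hy : y ∈ p.support) :
    (p.takeUntil y hy).support = p.support.take (p.support.idxOf y + 1) := by
  have hspec : (p.takeUntil y hy).support ++ (p.dropUntil y hy).support.tail = p.support := by
    rw [← Walk.support_append, Walk.take_spec]
  have hlen := SimpleGraph.Walk.length_support (p.takeUntil y hy)
  have hidx := idxOf_support_takeUntil p hy
  set k := p.support.idxOf y with hk
  rw [← hspec, List.take_append_of_le_length (by omega), List.take_of_length_le (by omega)]

lemma support_dropUntil_eq {u w y : V} (p : G.Walk u w) (hy : y ∈ p.support) :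
    (p.dropUntil y hy).support = p.support.drop (p.support.idxOf y) := by
  obtain ⟨l, hyl, hdec⟩ := takeUntil_support_decomp p hy
  have hspec : (p.takeUntil y hy).support ++ (p.dropUntil y hy).support.tail = p.support := by
    rw [← Walk.support_append, Walk.take_spec]
  have hlen := SimpleGraph.Walk.length_support (p.takeUntil y hy)
  rw [hdec] at hlen
  simp only [List.length_append, List.length_cons, List.length_nil] at hlen
  have hidx := idxOf_support_takeUntil p hy
  set k := p.support.idxOf y with hk
  have hil : k = l.length := by omega
  rw [← hspec, hdec, hil, List.append_assoc, List.drop_append_of_le_length (le_refl _),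
    List.drop_of_length_le (le_refl _), List.nil_append]
  simpa using (p.dropUntil y hy).support_eq_cons

lemma length_take_drop {u w y : V} (p : G.Walk u w) (hy : y ∈ p.support) :
    (p.takeUntil y hy).length + (p.dropUntil y hy).length = p.length := by
  have := congrArg Walk.length (Walk.take_spec p hy)
  rwa [Walk.length_append] at this



lemma arc {u w x y : V} (p : G.Walk u w) (hx : x ∈ p.support) (hy : y ∈ p.support)
    (hij : p.support.idxOf x < p.support.idxOf y) :
    ∃ W : G.Walk x y, W.length = p.support.idxOf y - p.support.idxOf x ∧
      W.support = (p.support.drop (p.support.idxOf x)).take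
        (p.support.idxOf y - p.support.idxOf x + 1) ∧
      W.edges ⊆ p.edges := by
  set i := p.support.idxOf x with hi
  set j := p.support.idxOf y with hj
  have hD : (p.dropUntil x hx).support = p.support.drop i := support_dropUntil_eq p hx
  have hjlt : j < p.support.length := List.idxOf_lt_length_iff.mpr hy
  have hidxD : (p.dropUntil x hx).support.idxOf y = j - i := by
    rw [hD, hj]
    exact idxOf_drop y p.support i (le_of_lt hij)
  have hyD : y ∈ (p.dropUntil x hx).support := by
    rw [← List.idxOf_lt_length_iff, hidxD, hD, List.length_drop]
    omega
  refine ⟨(p.dropUntil x hx).takeUntil y hyD, ?_, ?_, ?_⟩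
  · rw [← idxOf_support_takeUntil _ hyD, hidxD]
  · rw [support_takeUntil_eq _ hyD, hidxD, hD]
  · exact fun e he => Walk.edges_dropUntil_subset p hx
      (Walk.edges_takeUntil_subset _ hyD he)

section CycleFacts

variable {v : V} {C : G.Walk v v}

/-- Facts about the support list of a cycle. -/
lemma cycle_facts (hC : C.IsCycle) :
    C.support = C.support.take C.length ++ [v] ∧
    (C.support.take C.length).Nodup ∧
    v ∉ (C.support.take C.length).drop 1 ∧
    (∀ z ∈ C.support, z ∈ C.support.take C.length ∧
      C.support.idxOf z = (C.support.take C.length).idxOf z) := by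
  set n := C.length with hn
  set L := C.support with hL
  have hlen : L.length = n + 1 := C.length_support
  have h3 : 3 ≤ n := hC.three_le_length
  have hTnd : L.tail.Nodup := hC.2
  have hcons : L = v :: L.tail := C.support_eq_cons
  have hTlen : L.tail.length = n := by
    simp [List.length_tail, hlen]
  have hTne : L.tail ≠ [] := by
    intro h; rw [h] at hTlen; simp at hTlen; omega
  have hTlast : L.tail.getLast hTne = v := by
    rw [List.getLast_tail]
    exact C.getLast_support
  have hTdec : L.tail.dropLast ++ [v] = L.tail := by
    have := List.dropLast_append_getLast hTne
    rwa [hTlast] at this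
  have hvT : v ∉ L.tail.dropLast := by
    intro hmem
    have h2 : 0 < L.tail.dropLast.count v := List.count_pos_iff.mpr hmem
    have h3 := List.count_append (a := v) (l₁ := L.tail.dropLast) (l₂ := [v])
    rw [hTdec] at h3
    have h4 : L.tail.count v ≤ 1 := List.nodup_iff_count_le_one.mp hTnd v
    simp at h3
    omega
  have hdLlen : L.tail.dropLast.length = n - 1 := by
    rw [List.length_dropLast, hTlen]
  have hM : L.take n = v :: L.tail.dropLast := by
    conv_lhs => rw [hcons]
    rw [List.take_cons (by omega : 0 < n), List.dropLast_eq_take, hTlen]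
  have hMnd : (L.take n).Nodup := by
    rw [hM, List.nodup_cons]
    exact ⟨hvT, hTnd.sublist (List.dropLast_sublist _)⟩
  have hMdec : L = L.take n ++ [v] := by
    rw [hM, hcons]
    simp [hTdec]
  have hMdrop : v ∉ (L.take n).drop 1 := by
    rw [hM]; simpa using hvT
  refine ⟨hMdec, hMnd, hMdrop, ?_⟩
  intro z hz
  have hzM : z ∈ L.take n := by
    rw [hMdec] at hz
    rcases List.mem_append.mp hz with h | h
    · exact h
    · simp at h; subst h; rw [hM]; simp
  refine ⟨hzM, ?_⟩
  conv_lhs => rw [hMdec]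
  exact List.idxOf_append_of_mem hzM

end CycleFacts



section Seg

variable {α : Type*}

lemma seg_subset_take (M : List α) (i s : ℕ) :
    (M.drop i).take s ⊆ M.take (i + s) := by
  have h : (M.take (i + s)).drop i = (M.drop i).take s := by
    rw [List.drop_take]; congr 1; omega
  rw [← h]
  exact List.drop_subset _ _

lemma seg_nodup {M : List α} (hM : M.Nodup) {i s : ℕ} : ((M.drop i).take s).Nodup :=
  List.Nodup.sublist ((List.take_sublist _ _).trans (List.drop_sublist _ _)) hM

lemma seg_disjoint' [DecidableEq α] {M : List α} (hM : M.Nodup) {i s k : ℕ} (h : i + s ≤ k) :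
    ((M.drop i).take s).Disjoint (M.drop k) := fun _ ha hb =>
  (List.disjoint_take_drop hM h) (seg_subset_take M i s ha) hb

lemma seg_disjoint [DecidableEq α] {M : List α} (hM : M.Nodup) {i s k r : ℕ} (h : i + s ≤ k) :
    ((M.drop i).take s).Disjoint ((M.drop k).take r) := fun _ ha hb =>
  seg_disjoint' hM h ha (List.take_subset _ _ hb)

lemma not_mem_drop_of_not_mem_drop_one {v : α} {M : List α} (hv : v ∉ M.drop 1) {k : ℕ}
    (hk : 1 ≤ k) : v ∉ M.drop k := by
  intro h
  apply hv
  have : M.drop k = (M.drop 1).drop (k - 1) := by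
    rw [List.drop_drop]; congr 1; omega
  rw [this] at h
  exact List.drop_subset _ _ h

lemma not_mem_seg {v : α} {M : List α} (hv : v ∉ M.drop 1) {k s : ℕ} (hk : 1 ≤ k) :
    v ∉ (M.drop k).take s := fun h =>
  not_mem_drop_of_not_mem_drop_one hv hk (List.take_subset _ _ h)

end Seg

lemma girth_le_cycle (hg : 7 ≤ G.girth) {w : V} (D : G.Walk w w) (hD : D.IsCycle) :
    7 ≤ D.length := by
  have h1 : G.egirth ≤ (D.length : ℕ∞) := by
    rw [SimpleGraph.egirth]
    exact le_trans (iInf_le _ w) (le_trans (iInf_le _ D) (iInf_le _ hD))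
  have h2 := ENat.toNat_le_toNat h1 (by simp)
  simp only [SimpleGraph.girth] at hg
  simpa using le_trans hg h2

lemma chord_main {v : V} {C : G.Walk v v}
    (hg : ∀ (w : V) (D : G.Walk w w), D.IsCycle → 7 ≤ D.length)
    (hC : C.IsCycle) (heven : Even C.length)
    (hmin : ∀ (w : V) (D : G.Walk w w), D.IsCycle → Even D.length → C.length ≤ D.length)
    {x y : V} (hadj : G.Adj x y) (hx : x ∈ C.support) (hy : y ∈ C.support)
    (he : s(x, y) ∉ C.edges) (hij : C.support.idxOf x < C.support.idxOf y) :
    6 ≤ C.support.idxOf y - C.support.idxOf x ∧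
      C.support.idxOf y - C.support.idxOf x + 6 ≤ C.length ∧
      Even (C.support.idxOf y - C.support.idxOf x) := by
  obtain ⟨hMdec, hMnd, hMdrop, hmem⟩ := cycle_facts hC
  set n := C.length with hn
  set L := C.support with hLdef
  set M := L.take n with hMdef
  set i := L.idxOf x with hi
  set j := L.idxOf y with hj
  have hlen : L.length = n + 1 := C.length_support
  have hMlen : M.length = n := by rw [hMdef, List.length_take]; omega
  have hin : i < n := by
    have h := (hmem x hx).1
    have := List.idxOf_lt_length_iff.mpr h
    rw [hMlen] at this
    rw [hi, (hmem x hx).2]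
    exact this
  have hjn : j < n := by
    have h := (hmem y hy).1
    have := List.idxOf_lt_length_iff.mpr h
    rw [hMlen] at this
    rw [hj, (hmem y hy).2]
    exact this
  have hij' : i < j := hij
  have hj1 : 1 ≤ j := by omega
  obtain ⟨W, hWlen, hWsup, hWed⟩ := arc C hx hy hij
  rw [← hLdef, ← hi, ← hj] at hWlen hWsup
  have hWsupM : W.support = (M.drop i).take (j - i + 1) := by
    rw [hWsup]
    conv_lhs => rw [hMdec]
    rw [List.drop_append_of_le_length (by omega), List.take_append_of_le_length
      (by rw [List.length_drop]; omega)]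
  -- first cycle: chord + arc
  have hD1 : (Walk.cons hadj.symm W).IsCycle := by
    rw [Walk.cons_isCycle_iff]
    refine ⟨Walk.IsPath.mk' ?_, ?_⟩
    · rw [hWsupM]; exact seg_nodup hMnd
    · intro hmem'
      rw [Sym2.eq_swap] at hmem'
      exact he (hWed hmem')
  have hD1len : (Walk.cons hadj.symm W).length = j - i + 1 := by
    rw [Walk.length_cons, hWlen]
  have h7a : 7 ≤ j - i + 1 := by rw [← hD1len]; exact hg y _ hD1
  -- second cycle: chord + the rest of C
  have hyD : y ∈ C.support := hy
  set F := C.dropUntil y hy with hF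
  set P := C.takeUntil x hx with hP
  have hFlen : F.length = n - j := by
    have h1 := length_take_drop C hy
    have h2 := idxOf_support_takeUntil C hy
    rw [← hLdef, ← hj] at h2
    rw [← hF, ← hn] at h1
    omega
  have hPlen : P.length = i := by
    have h2 := idxOf_support_takeUntil C hx
    rw [← hLdef, ← hi] at h2
    rw [hP]
    exact h2.symm
  set q := F.append P with hq
  have hqsup : q.support = (M.drop j ++ [v]) ++ (M.drop 1).take i := by
    rw [hq, Walk.support_append, hF, hP, support_dropUntil_eq, support_takeUntil_eq,
      ← hLdef, ← hi, ← hj]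
    congr 1
    · conv_lhs => rw [hMdec]
      rw [List.drop_append_of_le_length (by omega)]
    · conv_lhs => rw [hMdec]
      rw [List.take_append_of_le_length (by omega), ← List.drop_one, List.drop_take]
      simp
  have hqpath : q.IsPath := by
    apply Walk.IsPath.mk'
    rw [hqsup]
    rw [List.nodup_append']
    refine ⟨?_, seg_nodup hMnd, ?_⟩
    · rw [List.nodup_append']
      refine ⟨List.Nodup.sublist (List.drop_sublist _ _) hMnd, List.nodup_singleton _, ?_⟩
      intro a ha hb
      simp at hb
      subst hb
      exact not_mem_drop_of_not_mem_drop_one hMdrop hj1 ha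
    · intro a ha hb
      rcases List.mem_append.mp ha with h | h
      · exact seg_disjoint' hMnd (by omega : 1 + i ≤ j) hb h
      · simp at h
        subst h
        exact not_mem_seg hMdrop le_rfl hb
  have hqed : s(x, y) ∉ q.edges := by
    rw [hq, Walk.edges_append]
    intro hmem'
    rcases List.mem_append.mp hmem' with h | h
    · exact he (Walk.edges_dropUntil_subset _ _ h)
    · exact he (Walk.edges_takeUntil_subset _ _ h)
  have hD2 : (Walk.cons hadj q).IsCycle := by
    rw [Walk.cons_isCycle_iff]
    exact ⟨hqpath, hqed⟩
  have hD2len : (Walk.cons hadj q).length = 1 + ((n - j) + i) := by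
    rw [Walk.length_cons, hq, Walk.length_append, hFlen, hPlen]
    omega
  have h7b : 7 ≤ 1 + ((n - j) + i) := by rw [← hD2len]; exact hg x _ hD2
  have hnev : n % 2 = 0 := Nat.even_iff.mp heven
  have hpar : (j - i) % 2 = 0 := by
    by_contra hodd
    have heq := hmin y _ hD1 (by rw [hD1len]; exact Nat.even_iff.mpr (by omega))
    rw [hD1len] at heq
    omega
  exact ⟨by omega, by omega, Nat.even_iff.mpr (by omega)⟩



lemma idx_lt_length_of_cycle {v z : V} {C : G.Walk v v} (hC : C.IsCycle) (hz : z ∈ C.support) :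
    C.support.idxOf z < C.length := by
  obtain ⟨hMdec, hMnd, hMdrop, hmem⟩ := cycle_facts hC
  have h := (hmem z hz).1
  have h2 := List.idxOf_lt_length_iff.mpr h
  rw [List.length_take, C.length_support] at h2
  rw [(hmem z hz).2]
  omega

lemma idxOf_start {v : V} (C : G.Walk v v) : C.support.idxOf v = 0 := by
  rw [C.support_eq_cons]
  exact List.idxOf_cons_self

lemma idxOf_pos {v z : V} {C : G.Walk v v} (hz : z ∈ C.support) (hne : z ≠ v) :
    0 < C.support.idxOf z := by
  rcases Nat.eq_zero_or_pos (C.support.idxOf z) with h | h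
  · exfalso
    apply hne
    have hv := idxOf_start C
    exact (List.idxOf_inj hz).mp (by rw [h, hv])
  · exact h

lemma arc_support_seg {v x z : V} {C : G.Walk v v} (hC : C.IsCycle) {W : G.Walk x z}
    (hsup : W.support = (C.support.drop (C.support.idxOf x)).take
      (C.support.idxOf z - C.support.idxOf x + 1))
    (hxz : C.support.idxOf x ≤ C.support.idxOf z)
    (hzn : C.support.idxOf z < C.length) :
    W.support = ((C.support.take C.length).drop (C.support.idxOf x)).take
      (C.support.idxOf z - C.support.idxOf x + 1) := by
  obtain ⟨hMdec, _, _, _⟩ := cycle_facts hC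
  have hlen := C.length_support
  set i := C.support.idxOf x with hi
  set j := C.support.idxOf z with hj
  rw [hsup]
  conv_lhs => rw [hMdec]
  rw [List.drop_append_of_le_length (by rw [List.length_take]; omega),
    List.take_append_of_le_length (by rw [List.length_drop, List.length_take]; omega)]

lemma dropUntil_support_seg {v z : V} {C : G.Walk v v} (hC : C.IsCycle) (hz : z ∈ C.support) :
    (C.dropUntil z hz).support =
      (C.support.take C.length).drop (C.support.idxOf z) ++ [v] := by
  have hzn := idx_lt_length_of_cycle hC hz
  obtain ⟨hMdec, _, _, _⟩ := cycle_facts hC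
  have hlen := C.length_support
  set j := C.support.idxOf z with hj
  rw [support_dropUntil_eq, ← hj]
  conv_lhs => rw [hMdec]
  rw [List.drop_append_of_le_length (by rw [List.length_take]; omega)]

lemma takeUntil_support_tail_seg {v z : V} {C : G.Walk v v} (hC : C.IsCycle)
    (hz : z ∈ C.support) :
    (C.takeUntil z hz).support.tail =
      ((C.support.take C.length).drop 1).take (C.support.idxOf z) := by
  have hzn := idx_lt_length_of_cycle hC hz
  obtain ⟨hMdec, _, _, _⟩ := cycle_facts hC
  have hlen := C.length_support
  set j := C.support.idxOf z with hj
  rw [support_takeUntil_eq, ← hj]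
  conv_lhs => rw [hMdec]
  rw [List.take_append_of_le_length (by rw [List.length_take]; omega), ← List.drop_one,
    List.drop_take]
  congr 1

lemma disj_symm {α : Type*} {l1 l2 : List α} (h : l1.Disjoint l2) : l2.Disjoint l1 :=
  fun _ ha hb => h hb ha

lemma shared {v : V} {C : G.Walk v v}
    (hg : ∀ (w : V) (D : G.Walk w w), D.IsCycle → 7 ≤ D.length)
    (hC : C.IsCycle) (heven : Even C.length)
    (hmin : ∀ (w : V) (D : G.Walk w w), D.IsCycle → Even D.length → C.length ≤ D.length)
    {w1 w2 : V} (h1 : G.Adj v w1) (h2 : G.Adj v w2)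
    (hw1 : w1 ∈ C.support) (hw2 : w2 ∈ C.support)
    (he1 : s(v, w1) ∉ C.edges) (he2 : s(v, w2) ∉ C.edges)
    (hlt : C.support.idxOf w1 < C.support.idxOf w2) : False := by
  obtain ⟨hMdec, hMnd, hMdrop, hmem⟩ := cycle_facts hC
  have hvsup : v ∈ C.support := C.start_mem_support
  have hv0 : C.support.idxOf v = 0 := idxOf_start C
  have hb1 : 0 < C.support.idxOf w1 := idxOf_pos hw1 h1.ne'
  have hb2n : C.support.idxOf w2 < C.length := idx_lt_length_of_cycle hC hw2
  obtain ⟨hc11, hc12, hc13⟩ := chord_main hg hC heven hmin h1 hvsup hw1 he1 (by omega)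
  obtain ⟨hc21, hc22, hc23⟩ := chord_main hg hC heven hmin h2 hvsup hw2 he2 (by omega)
  rw [hv0] at hc11 hc12 hc13 hc21 hc22 hc23
  simp only [Nat.sub_zero] at hc11 hc12 hc13 hc21 hc22 hc23
  obtain ⟨B, hBlen, hBsup, hBed⟩ := arc C hw1 hw2 hlt
  have hBsupM := arc_support_seg hC hBsup (le_of_lt hlt) hb2n
  have hcyc : (Walk.cons h1 (B.concat h2.symm)).IsCycle := by
    rw [Walk.cons_isCycle_iff]
    refine ⟨Walk.IsPath.mk' ?_, ?_⟩
    · rw [Walk.support_concat, hBsupM, List.nodup_append']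
      refine ⟨seg_nodup hMnd, List.nodup_singleton _, ?_⟩
      intro a ha hb
      simp at hb
      subst hb
      exact not_mem_seg hMdrop hb1 ha
    · rw [Walk.edges_concat, List.concat_eq_append]
      intro hmem'
      rcases List.mem_append.mp hmem' with h | h
      · exact he1 (hBed h)
      · simp at h
        rcases h with ⟨h', h''⟩ | h'
        · exact h1.ne' h''
        · subst h'
          exact absurd hlt (lt_irrefl _)
  have hlen2 : (Walk.cons h1 (B.concat h2.symm)).length =
      (C.support.idxOf w2 - C.support.idxOf w1) + 2 := by
    rw [Walk.length_cons, Walk.length_concat, hBlen]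
  have hevenc : Even (Walk.cons h1 (B.concat h2.symm)).length := by
    rw [hlen2]
    have e1 := Nat.even_iff.mp hc13
    have e2 := Nat.even_iff.mp hc23
    exact Nat.even_iff.mpr (by omega)
  have hfin := hmin v _ hcyc hevenc
  rw [hlen2] at hfin
  omega



lemma two_chords {v : V} {C : G.Walk v v}
    (hg : ∀ (w : V) (D : G.Walk w w), D.IsCycle → 7 ≤ D.length)
    (hC : C.IsCycle) (heven : Even C.length)
    (hmin : ∀ (w : V) (D : G.Walk w w), D.IsCycle → Even D.length → C.length ≤ D.length)
    {y1 x2 y2 : V} (h1 : G.Adj v y1) (h2 : G.Adj x2 y2)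
    (hy1 : y1 ∈ C.support) (hx2 : x2 ∈ C.support) (hy2 : y2 ∈ C.support)
    (he1 : s(v, y1) ∉ C.edges) (he2 : s(x2, y2) ∉ C.edges)
    (hneq : s(v, y1) ≠ s(x2, y2))
    (hx2v : x2 ≠ v) (hy2v : y2 ≠ v) (hy1x2 : y1 ≠ x2) (hy1y2 : y1 ≠ y2)
    (hcd : C.support.idxOf x2 < C.support.idxOf y2) : False := by
  obtain ⟨hMdec, hMnd, hMdrop, hmem⟩ := cycle_facts hC
  have hvsup : v ∈ C.support := C.start_mem_support
  have hv0 : C.support.idxOf v = 0 := idxOf_start C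
  have hbpos : 0 < C.support.idxOf y1 := idxOf_pos hy1 h1.ne'
  have hcpos : 0 < C.support.idxOf x2 := idxOf_pos hx2 hx2v
  have hdpos : 0 < C.support.idxOf y2 := idxOf_pos hy2 hy2v
  have hbn : C.support.idxOf y1 < C.length := idx_lt_length_of_cycle hC hy1
  have hcn : C.support.idxOf x2 < C.length := idx_lt_length_of_cycle hC hx2
  have hdn : C.support.idxOf y2 < C.length := idx_lt_length_of_cycle hC hy2
  have hbc : C.support.idxOf y1 ≠ C.support.idxOf x2 := fun h =>
    hy1x2 ((List.idxOf_inj hy1).mp h)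
  have hbd : C.support.idxOf y1 ≠ C.support.idxOf y2 := fun h =>
    hy1y2 ((List.idxOf_inj hy1).mp h)
  obtain ⟨hc11, hc12, hc13⟩ := chord_main hg hC heven hmin h1 hvsup hy1 he1 (by omega)
  obtain ⟨hc21, hc22, hc23⟩ := chord_main hg hC heven hmin h2 hx2 hy2 he2 hcd
  rw [hv0] at hc11 hc12 hc13
  simp only [Nat.sub_zero] at hc11 hc12 hc13
  have hnev : C.length % 2 = 0 := Nat.even_iff.mp heven
  have hbev : C.support.idxOf y1 % 2 = 0 := Nat.even_iff.mp hc13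
  have hdcev : (C.support.idxOf y2 - C.support.idxOf x2) % 2 = 0 := Nat.even_iff.mp hc23
  rcases Nat.lt_trichotomy (C.support.idxOf y1) (C.support.idxOf x2) with hord | hord | hord
  · -- separate: b < c < d
    obtain ⟨A, hAlen, hAsup, hAed⟩ := arc C hy1 hx2 hord
    have hAsupM := arc_support_seg hC hAsup (le_of_lt hord) hcn
    have hFsup := dropUntil_support_seg hC hy2
    have hFlen : (C.dropUntil y2 hy2).length = C.length - C.support.idxOf y2 := by
      have hl1 := length_take_drop C hy2
      have hl2 := idxOf_support_takeUntil C hy2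
      omega
    have hcyc : (Walk.cons h1 (A.append (Walk.cons h2 (C.dropUntil y2 hy2)))).IsCycle := by
      rw [Walk.cons_isCycle_iff]
      refine ⟨Walk.IsPath.mk' ?_, ?_⟩
      · rw [Walk.support_append, Walk.support_cons, List.tail_cons, hAsupM, hFsup,
          List.nodup_append']
        refine ⟨seg_nodup hMnd, ?_, ?_⟩
        · rw [List.nodup_append']
          refine ⟨List.Nodup.sublist (List.drop_sublist _ _) hMnd, List.nodup_singleton _, ?_⟩
          intro a ha hb
          simp at hb
          subst hb
          exact not_mem_drop_of_not_mem_drop_one hMdrop (by omega) ha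
        · intro a ha hb
          rcases List.mem_append.mp hb with h | h
          · exact seg_disjoint' hMnd (by omega) ha h
          · simp at h
            subst h
            exact not_mem_seg hMdrop (by omega) ha
      · rw [Walk.edges_append, Walk.edges_cons]
        intro hmem'
        rcases List.mem_append.mp hmem' with h | h
        · exact he1 (hAed h)
        · rcases List.mem_cons.mp h with h | h
          · exact hneq h
          · exact he1 (Walk.edges_dropUntil_subset _ _ h)
    have hlen2 : (Walk.cons h1 (A.append (Walk.cons h2 (C.dropUntil y2 hy2)))).length =
        1 + ((C.support.idxOf x2 - C.support.idxOf y1) +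
          (1 + (C.length - C.support.idxOf y2))) := by
      rw [Walk.length_cons, Walk.length_append, Walk.length_cons, hAlen, hFlen]
      omega
    have hfin := hmin v _ hcyc (by rw [hlen2]; exact Nat.even_iff.mpr (by omega))
    rw [hlen2] at hfin
    omega
  · exact hbc hord
  · rcases Nat.lt_trichotomy (C.support.idxOf y2) (C.support.idxOf y1) with hord2 | hord2 | hord2
    · -- nested: c < d < b
      obtain ⟨A, hAlen, hAsup, hAed⟩ := arc C hy2 hy1 hord2
      have hAsupM := arc_support_seg hC hAsup (le_of_lt hord2) hbn
      have hTsup := takeUntil_support_tail_seg hC hx2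
      have hTlen : (C.takeUntil x2 hx2).length = C.support.idxOf x2 :=
        (idxOf_support_takeUntil C hx2).symm
      have hcyc : (Walk.cons h2 ((A.concat h1.symm).append (C.takeUntil x2 hx2))).IsCycle := by
        rw [Walk.cons_isCycle_iff]
        refine ⟨Walk.IsPath.mk' ?_, ?_⟩
        · rw [Walk.support_append, Walk.support_concat, hAsupM, hTsup,
            List.nodup_append', List.nodup_append']
          refine ⟨⟨seg_nodup hMnd, List.nodup_singleton _, ?_⟩, seg_nodup hMnd, ?_⟩
          · intro a ha hb
            simp at hb
            subst hb
            exact not_mem_seg hMdrop (by omega) ha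
          · intro a ha hb
            rcases List.mem_append.mp ha with h | h
            · exact disj_symm (seg_disjoint hMnd (by omega)) h hb
            · simp at h
              subst h
              exact not_mem_seg hMdrop (by omega) hb
        · rw [Walk.edges_append, Walk.edges_concat, List.concat_eq_append]
          intro hmem'
          rcases List.mem_append.mp hmem' with h | h
          · rcases List.mem_append.mp h with h | h
            · exact he2 (hAed h)
            · rw [List.mem_singleton] at h
              apply hneq
              rw [h]
              exact Sym2.eq_swap
          · exact he2 (Walk.edges_takeUntil_subset _ _ h)
      have hlen2 : (Walk.cons h2 ((A.concat h1.symm).append (C.takeUntil x2 hx2))).length =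
          1 + (((C.support.idxOf y1 - C.support.idxOf y2) + 1) +
            C.support.idxOf x2) := by
        rw [Walk.length_cons, Walk.length_append, Walk.length_concat, hAlen, hTlen]
        omega
      have hfin := hmin x2 _ hcyc (by rw [hlen2]; exact Nat.even_iff.mpr (by omega))
      rw [hlen2] at hfin
      omega
    · exact hbd hord2.symm
    · -- crossing: c < b < d
      obtain ⟨B, hBlen, hBsup, hBed⟩ := arc C hy1 hy2 hord2
      have hBsupM := arc_support_seg hC hBsup (le_of_lt hord2) hdn
      obtain ⟨B2, hB2len, hB2sup, hB2ed⟩ := arc C hx2 hy1 hord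
      have hB2supM := arc_support_seg hC hB2sup (le_of_lt hord) hbn
      have hTsup := takeUntil_support_tail_seg hC hx2
      have hTlen : (C.takeUntil x2 hx2).length = C.support.idxOf x2 :=
        (idxOf_support_takeUntil C hx2).symm
      have hFsup := dropUntil_support_seg hC hy2
      have hFlen : (C.dropUntil y2 hy2).length = C.length - C.support.idxOf y2 := by
        have hl1 := length_take_drop C hy2
        have hl2 := idxOf_support_takeUntil C hy2
        omega
      -- first crossing cycle
      have hcyc1 : (Walk.cons h2
          ((B.reverse.concat h1.symm).append (C.takeUntil x2 hx2))).IsCycle := by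
        rw [Walk.cons_isCycle_iff]
        refine ⟨Walk.IsPath.mk' ?_, ?_⟩
        · rw [Walk.support_append, Walk.support_concat,
            Walk.support_reverse, hBsupM, hTsup, List.nodup_append', List.nodup_append']
          refine ⟨⟨List.nodup_reverse.mpr (seg_nodup hMnd), List.nodup_singleton _, ?_⟩,
            seg_nodup hMnd, ?_⟩
          · intro a ha hb
            simp at hb
            subst hb
            exact not_mem_seg hMdrop (by omega) (List.mem_reverse.mp ha)
          · intro a ha hb
            rcases List.mem_append.mp ha with h | h
            · exact disj_symm (seg_disjoint hMnd (by omega)) (List.mem_reverse.mp h) hb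
            · simp at h
              subst h
              exact not_mem_seg hMdrop (by omega) hb
        · rw [Walk.edges_append, Walk.edges_concat, List.concat_eq_append, Walk.edges_reverse]
          intro hmem'
          rcases List.mem_append.mp hmem' with h | h
          · rcases List.mem_append.mp h with h | h
            · exact he2 (hBed (List.mem_reverse.mp h))
            · rw [List.mem_singleton] at h
              apply hneq
              rw [h]
              exact Sym2.eq_swap
          · exact he2 (Walk.edges_takeUntil_subset _ _ h)
      have hlen1 : (Walk.cons h2
          ((B.reverse.concat h1.symm).append (C.takeUntil x2 hx2))).length =
          1 + (((C.support.idxOf y2 - C.support.idxOf y1) + 1) +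
            C.support.idxOf x2) := by
        rw [Walk.length_cons, Walk.length_append, Walk.length_concat, Walk.length_reverse,
          hBlen, hTlen]
        omega
      -- second crossing cycle
      have hcyc2 : (Walk.cons h1
          (B2.reverse.append (Walk.cons h2 (C.dropUntil y2 hy2)))).IsCycle := by
        rw [Walk.cons_isCycle_iff]
        refine ⟨Walk.IsPath.mk' ?_, ?_⟩
        · rw [Walk.support_append, Walk.support_cons, List.tail_cons, Walk.support_reverse,
            hB2supM, hFsup, List.nodup_append']
          refine ⟨List.nodup_reverse.mpr (seg_nodup hMnd), ?_, ?_⟩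
          · rw [List.nodup_append']
            refine ⟨List.Nodup.sublist (List.drop_sublist _ _) hMnd, List.nodup_singleton _, ?_⟩
            intro a ha hb
            simp at hb
            subst hb
            exact not_mem_drop_of_not_mem_drop_one hMdrop (by omega) ha
          · intro a ha hb
            rcases List.mem_append.mp hb with h | h
            · exact seg_disjoint' hMnd (by omega) (List.mem_reverse.mp ha) h
            · simp at h
              subst h
              exact not_mem_seg hMdrop (by omega) (List.mem_reverse.mp ha)
        · rw [Walk.edges_append, Walk.edges_cons, Walk.edges_reverse]
          intro hmem'
          rcases List.mem_append.mp hmem' with h | h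
          · exact he1 (hB2ed (List.mem_reverse.mp h))
          · rcases List.mem_cons.mp h with h | h
            · exact hneq h
            · exact he1 (Walk.edges_dropUntil_subset _ _ h)
      have hlen2 : (Walk.cons h1
          (B2.reverse.append (Walk.cons h2 (C.dropUntil y2 hy2)))).length =
          1 + ((C.support.idxOf y1 - C.support.idxOf x2) +
            (1 + (C.length - C.support.idxOf y2))) := by
        rw [Walk.length_cons, Walk.length_append, Walk.length_cons, Walk.length_reverse,
          hB2len, hFlen]
        omega
      have h7b : 7 ≤ (Walk.cons h1
          (B2.reverse.append (Walk.cons h2 (C.dropUntil y2 hy2)))).length := hg v _ hcyc2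
      rw [hlen2] at h7b
      have hfin := hmin x2 _ hcyc1 (by rw [hlen1]; exact Nat.even_iff.mpr (by omega))
      rw [hlen1] at hfin
      omega



lemma length_rotate {v u : V} (C : G.Walk v v) (h : u ∈ C.support) :
    (C.rotate u h).length = C.length := by
  have h1 : (C.rotate u h).length = (C.dropUntil u h).length + (C.takeUntil u h).length := by
    rw [Walk.rotate, Walk.length_append]
  have h2 := length_take_drop C h
  omega

lemma mem_support_tail_of_closed {v z : V} {C : G.Walk v v} (hnil : C.length ≠ 0)
    (hz : z ∈ C.support) : z ∈ C.support.tail := by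
  have hTlen : C.support.tail.length = C.length := by
    rw [List.length_tail, C.length_support]
    omega
  have hTne : C.support.tail ≠ [] := by
    intro h
    rw [h] at hTlen
    simp at hTlen
    exact hnil hTlen.symm
  rw [C.support_eq_cons] at hz
  rcases List.mem_cons.mp hz with h | h
  · subst h
    have hlast : C.support.tail.getLast hTne = z := by
      rw [List.getLast_tail]
      exact C.getLast_support
    have hm := List.getLast_mem hTne
    rwa [hlast] at hm
  · exact h

lemma mem_support_rotate {v u z : V} {C : G.Walk v v} (hC : C.IsCycle) (h : u ∈ C.support)
    (hz : z ∈ C.support) : z ∈ (C.rotate u h).support := by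
  have h3 := hC.three_le_length
  have h1 : z ∈ C.support.tail := mem_support_tail_of_closed (by omega) hz
  have h2 : z ∈ (C.rotate u h).support.tail :=
    ((Walk.support_rotate C u h).perm.mem_iff).mpr h1
  exact List.mem_of_mem_tail h2

lemma edges_rotate_iff {v u : V} (C : G.Walk v v) (h : u ∈ C.support) {e : Sym2 V} :
    e ∈ (C.rotate u h).edges ↔ e ∈ C.edges := (Walk.rotate_edges C u h).perm.mem_iff

end Stmt11Aux

open Stmt11Aux

/-- Let `C` be a shortest even cycle in a graph of girth at least `7` with maximum degree
at most `3`. Then `C` has at most one chord, and every chord of `C` joins two vertices at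
even distance along `C` (equivalently, two vertices whose positions along `C` have the
same parity). -/
theorem stmt_11 {V : Type*} [Fintype V] [DecidableEq V] (G : SimpleGraph V)
    [DecidableRel G.Adj]
    (hgirth : 7 ≤ G.girth) (hdeg : ∀ v, G.degree v ≤ 3)
    (v : V) (C : G.Walk v v) (hC : C.IsCycle) (heven : Even C.length)
    (hmin : ∀ (w : V) (D : G.Walk w w), D.IsCycle → Even D.length → C.length ≤ D.length) :
    Set.Subsingleton {e : Sym2 V | e ∈ G.edgeSet ∧ e ∉ C.edges ∧ ∀ x ∈ e, x ∈ C.support} ∧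
    ∀ x y : V, G.Adj x y → x ∈ C.support → y ∈ C.support → s(x, y) ∉ C.edges →
      Even (C.support.idxOf x + C.support.idxOf y) := by
  have hg : ∀ (w : V) (D : G.Walk w w), D.IsCycle → 7 ≤ D.length :=
    fun w D hD => girth_le_cycle hgirth D hD
  have key : ∀ z w1 w2 : V, G.Adj z w1 → G.Adj z w2 → z ∈ C.support → w1 ∈ C.support →
      w2 ∈ C.support → s(z, w1) ∉ C.edges → s(z, w2) ∉ C.edges → w1 ≠ w2 → False := by
    intro z w1 w2 a1 a2 hzs hw1s hw2s hch1 hch2 hww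
    have hC2c : (C.rotate z hzs).IsCycle := hC.rotate hzs
    have hC2len : (C.rotate z hzs).length = C.length := length_rotate C hzs
    have hC2even : Even (C.rotate z hzs).length := by rw [hC2len]; exact heven
    have hC2min : ∀ (w : V) (D : G.Walk w w), D.IsCycle → Even D.length →
        (C.rotate z hzs).length ≤ D.length := by
      intro w D hD hE
      rw [hC2len]
      exact hmin w D hD hE
    have hw1' : w1 ∈ (C.rotate z hzs).support := mem_support_rotate hC hzs hw1s
    have hw2' : w2 ∈ (C.rotate z hzs).support := mem_support_rotate hC hzs hw2s
    have hch1' : s(z, w1) ∉ (C.rotate z hzs).edges :=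
      fun h => hch1 ((edges_rotate_iff C hzs).mp h)
    have hch2' : s(z, w2) ∉ (C.rotate z hzs).edges :=
      fun h => hch2 ((edges_rotate_iff C hzs).mp h)
    rcases Nat.lt_trichotomy ((C.rotate z hzs).support.idxOf w1)
        ((C.rotate z hzs).support.idxOf w2) with hlt | hlt | hlt
    · exact shared hg hC2c hC2even hC2min a1 a2 hw1' hw2' hch1' hch2' hlt
    · exact hww ((List.idxOf_inj hw1').mp hlt)
    · exact shared hg hC2c hC2even hC2min a2 a1 hw2' hw1' hch2' hch1' hlt
  constructor
  · intro e1 he1 e2 he2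
    simp only [Set.mem_setOf_eq] at he1 he2
    revert he2
    induction e2 using Sym2.ind with
    | _ x2 y2 =>
    revert he1
    induction e1 using Sym2.ind with
    | _ x1 y1 =>
    intro he1 he2
    obtain ⟨ha1, hne1, hsup1⟩ := he1
    obtain ⟨ha2, hne2, hsup2⟩ := he2
    rw [SimpleGraph.mem_edgeSet] at ha1 ha2
    have hx1 : x1 ∈ C.support := hsup1 x1 (Sym2.mem_mk_left _ _)
    have hy1 : y1 ∈ C.support := hsup1 y1 (Sym2.mem_mk_right _ _)
    have hx2 : x2 ∈ C.support := hsup2 x2 (Sym2.mem_mk_left _ _)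
    have hy2 : y2 ∈ C.support := hsup2 y2 (Sym2.mem_mk_right _ _)
    by_contra hne
    -- shared-vertex cases
    by_cases h11 : x1 = x2
    · subst h11
      exact key x1 y1 y2 ha1 ha2 hx1 hy1 hy2 hne1 hne2
        (fun h => hne (by rw [h]))
    by_cases h12 : x1 = y2
    · subst h12
      refine key x1 y1 x2 ha1 ha2.symm hx1 hy1 hx2 hne1
        (fun h => hne2 (by rwa [Sym2.eq_swap] at h)) ?_
      intro h
      subst h
      exact hne (by rw [Sym2.eq_swap])
    by_cases h21 : y1 = x2
    · subst h21
      refine key y1 x1 y2 ha1.symm ha2 hy1 hx1 hy2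
        (fun h => hne1 (by rwa [Sym2.eq_swap] at h)) hne2 ?_
      intro h
      subst h
      exact hne (Sym2.eq_swap)
    by_cases h22 : y1 = y2
    · subst h22
      refine key y1 x1 x2 ha1.symm ha2.symm hy1 hx1 hx2
        (fun h => hne1 (by rwa [Sym2.eq_swap] at h))
        (fun h => hne2 (by rwa [Sym2.eq_swap] at h)) h11
    -- disjoint chords: rotate at x1
    have hC2c : (C.rotate x1 hx1).IsCycle := hC.rotate hx1
    have hC2len : (C.rotate x1 hx1).length = C.length := length_rotate C hx1
    have hC2even : Even (C.rotate x1 hx1).length := by rw [hC2len]; exact heven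
    have hC2min : ∀ (w : V) (D : G.Walk w w), D.IsCycle → Even D.length →
        (C.rotate x1 hx1).length ≤ D.length := by
      intro w D hD hE
      rw [hC2len]
      exact hmin w D hD hE
    have hy1' : y1 ∈ (C.rotate x1 hx1).support := mem_support_rotate hC hx1 hy1
    have hx2' : x2 ∈ (C.rotate x1 hx1).support := mem_support_rotate hC hx1 hx2
    have hy2' : y2 ∈ (C.rotate x1 hx1).support := mem_support_rotate hC hx1 hy2
    have hne1' : s(x1, y1) ∉ (C.rotate x1 hx1).edges :=
      fun h => hne1 ((edges_rotate_iff C hx1).mp h)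
    have hne2' : s(x2, y2) ∉ (C.rotate x1 hx1).edges :=
      fun h => hne2 ((edges_rotate_iff C hx1).mp h)
    have hne2'' : s(y2, x2) ∉ (C.rotate x1 hx1).edges := by
      rw [Sym2.eq_swap]
      exact hne2'
    rcases Nat.lt_trichotomy ((C.rotate x1 hx1).support.idxOf x2)
        ((C.rotate x1 hx1).support.idxOf y2) with hlt | hlt | hlt
    · exact two_chords hg hC2c hC2even hC2min ha1 ha2 hy1' hx2' hy2' hne1' hne2'
        hne (fun h => h11 h.symm) (fun h => h12 h.symm) h21 h22 hlt
    · exact ha2.ne ((List.idxOf_inj hx2').mp hlt)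
    · exact two_chords hg hC2c hC2even hC2min ha1 ha2.symm hy1' hy2' hx2' hne1' hne2''
        (fun h => hne (h.trans (Sym2.eq_swap))) (fun h => h12 h.symm)
        (fun h => h11 h.symm) h22 h21 hlt
  · intro x y hadj hx hy hne
    rcases Nat.lt_trichotomy (C.support.idxOf x) (C.support.idxOf y) with h | h | h
    · obtain ⟨_, _, hev⟩ := chord_main hg hC heven hmin hadj hx hy hne h
      have h2 := Nat.even_iff.mp hev
      exact Nat.even_iff.mpr (by omega)
    · exact absurd ((List.idxOf_inj hx).mp h) hadj.ne
    · have hne' : s(y, x) ∉ C.edges := by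
        rw [Sym2.eq_swap]
        exact hne
      obtain ⟨_, _, hev⟩ := chord_main hg hC heven hmin hadj.symm hy hx hne' h
      have h2 := Nat.even_iff.mp hev
      exact Nat.even_iff.mpr (by omega)
end
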